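/- Let Γ₁,…,Γ_K (K ≥ 1) be d×d complex matrices that are Hermitian, unitary, and pairwise anticommuting, and let M₀, M₁ be D×D positive semidefinite matrices with M₀ + M₁ = I_D (a binary POVM). Then ‖(1/(2K)) · ∑_{k=1}^K ( (I_d + Γₖ) ⊗ M₀ + (I_d − Γₖ) ⊗ M₁ )‖ ≤ 1/2 + 1/(2√K). (This establishes the indistinguishability security of the Clifford encryption scheme at rate 1/2 + 1/(2√K).) -/

import Mathlib

open Matrix
open scoped Matrix.Norms.L2Operator Kronecker ComplexOrder

section Stmt9Aux

variable {m n p : Type*} [Fintype m] [Fintype n] [Fintype p]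
  [DecidableEq m] [DecidableEq n] [DecidableEq p]

private lemma sum_sq_eq_re (x : n → ℂ) : ∑ i, ‖x i‖ ^ 2 = (star x ⬝ᵥ x).re := by
  simp only [dotProduct, Complex.re_sum, Pi.star_apply, RCLike.star_def]
  refine Finset.sum_congr rfl fun i _ => ?_
  rw [mul_comm, Complex.mul_conj, Complex.ofReal_re, Complex.sq_norm]

private lemma opNorm_le_of_forall (A : Matrix m n ℂ) {c : ℝ} (hc : 0 ≤ c)
    (h : ∀ x : n → ℂ, ∑ i, ‖(A *ᵥ x) i‖ ^ 2 ≤ c ^ 2 * ∑ i, ‖x i‖ ^ 2) :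
    ‖A‖ ≤ c := by
  rw [Matrix.l2_opNorm_def]
  refine ContinuousLinearMap.opNorm_le_bound _ hc fun x => ?_
  have h1 : ((Matrix.toEuclideanLin.trans LinearMap.toContinuousLinearMap) A) x
      = (EuclideanSpace.equiv m ℂ).symm (A *ᵥ x) := rfl
  rw [h1, EuclideanSpace.norm_eq, EuclideanSpace.norm_eq]
  have h3 : Real.sqrt (∑ i, ‖(A *ᵥ x) i‖ ^ 2) ≤ Real.sqrt (c ^ 2 * ∑ i, ‖(x : n → ℂ) i‖ ^ 2) :=
    Real.sqrt_le_sqrt (h x)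
  calc Real.sqrt (∑ i, ‖((EuclideanSpace.equiv m ℂ).symm (A *ᵥ x)) i‖ ^ 2)
      = Real.sqrt (∑ i, ‖(A *ᵥ x) i‖ ^ 2) := rfl
    _ ≤ Real.sqrt (c ^ 2 * ∑ i, ‖(x : n → ℂ) i‖ ^ 2) := h3
    _ = c * Real.sqrt (∑ i, ‖(x : n → ℂ) i‖ ^ 2) := by
        rw [Real.sqrt_mul (sq_nonneg c), Real.sqrt_sq hc]

private lemma sum_sq_mulVec_le (A : Matrix m n ℂ) (x : n → ℂ) :
    ∑ i, ‖(A *ᵥ x) i‖ ^ 2 ≤ ‖A‖ ^ 2 * ∑ i, ‖x i‖ ^ 2 := by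
  have h := Matrix.l2_opNorm_mulVec A ((EuclideanSpace.equiv n ℂ).symm x)
  rw [show A *ᵥ ((EuclideanSpace.equiv n ℂ).symm x) = A *ᵥ x from rfl] at h
  have h1 : ‖(EuclideanSpace.equiv m ℂ).symm (A *ᵥ x)‖
      = Real.sqrt (∑ i, ‖(A *ᵥ x) i‖ ^ 2) := EuclideanSpace.norm_eq _
  have h2 : ‖(EuclideanSpace.equiv n ℂ).symm x‖ = Real.sqrt (∑ i, ‖x i‖ ^ 2) :=
    EuclideanSpace.norm_eq _
  rw [h1, h2] at h
  have ha : (0:ℝ) ≤ ∑ i, ‖(A *ᵥ x) i‖ ^ 2 := Finset.sum_nonneg fun i _ => sq_nonneg _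
  have hb : (0:ℝ) ≤ ∑ i, ‖x i‖ ^ 2 := Finset.sum_nonneg fun i _ => sq_nonneg _
  calc ∑ i, ‖(A *ᵥ x) i‖ ^ 2 = Real.sqrt (∑ i, ‖(A *ᵥ x) i‖ ^ 2) ^ 2 :=
        (Real.sq_sqrt ha).symm
    _ ≤ (‖A‖ * Real.sqrt (∑ i, ‖x i‖ ^ 2)) ^ 2 := pow_le_pow_left₀ (Real.sqrt_nonneg _) h 2
    _ = ‖A‖ ^ 2 * ∑ i, ‖x i‖ ^ 2 := by rw [mul_pow, Real.sq_sqrt hb]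

private lemma matrix_norm_one_le : ‖(1 : Matrix n n ℂ)‖ ≤ 1 := by
  refine opNorm_le_of_forall _ zero_le_one fun x => ?_
  simp [Matrix.one_mulVec]

private lemma one_kron_norm_le (B : Matrix p p ℂ) :
    ‖(1 : Matrix n n ℂ) ⊗ₖ B‖ ≤ ‖B‖ := by
  refine opNorm_le_of_forall _ (norm_nonneg B) fun v => ?_
  have key : ∀ i j, (((1 : Matrix n n ℂ) ⊗ₖ B) *ᵥ v) (i, j)
      = (B *ᵥ fun k => v (i, k)) j := by
    intro i j
    simp only [mulVec, dotProduct, Fintype.sum_prod_type, kroneckerMap_apply, one_apply,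
      ite_mul, one_mul, zero_mul]
    rw [Finset.sum_comm]
    simp [Finset.sum_ite_eq]
  calc ∑ q, ‖((((1 : Matrix n n ℂ) ⊗ₖ B)) *ᵥ v) q‖ ^ 2
      = ∑ i, ∑ j, ‖(B *ᵥ fun k => v (i, k)) j‖ ^ 2 := by
        rw [Fintype.sum_prod_type]
        exact Finset.sum_congr rfl fun i _ => Finset.sum_congr rfl fun j _ => by rw [key]
    _ ≤ ∑ i, ‖B‖ ^ 2 * ∑ k, ‖v (i, k)‖ ^ 2 :=
        Finset.sum_le_sum fun i _ => sum_sq_mulVec_le B _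
    _ = ‖B‖ ^ 2 * ∑ q, ‖v q‖ ^ 2 := by
        rw [← Finset.mul_sum, Fintype.sum_prod_type]

private lemma kron_one_norm_le (A : Matrix n n ℂ) :
    ‖A ⊗ₖ (1 : Matrix p p ℂ)‖ ≤ ‖A‖ := by
  refine opNorm_le_of_forall _ (norm_nonneg A) fun v => ?_
  have key : ∀ i j, ((A ⊗ₖ (1 : Matrix p p ℂ)) *ᵥ v) (i, j)
      = (A *ᵥ fun k => v (k, j)) i := by
    intro i j
    simp only [mulVec, dotProduct, Fintype.sum_prod_type, kroneckerMap_apply, one_apply,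
      mul_ite, mul_one, mul_zero]
    simp [Finset.sum_ite_eq]
  calc ∑ q, ‖((A ⊗ₖ (1 : Matrix p p ℂ)) *ᵥ v) q‖ ^ 2
      = ∑ j, ∑ i, ‖(A *ᵥ fun k => v (k, j)) i‖ ^ 2 := by
        rw [Fintype.sum_prod_type, Finset.sum_comm]
        exact Finset.sum_congr rfl fun j _ => Finset.sum_congr rfl fun i _ => by rw [key]
    _ ≤ ∑ j, ‖A‖ ^ 2 * ∑ k, ‖v (k, j)‖ ^ 2 :=
        Finset.sum_le_sum fun j _ => sum_sq_mulVec_le A _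
    _ = ‖A‖ ^ 2 * ∑ q, ‖v q‖ ^ 2 := by
        rw [← Finset.mul_sum, Fintype.sum_prod_type, Finset.sum_comm]

private lemma kron_norm_le (A : Matrix n n ℂ) (B : Matrix p p ℂ) :
    ‖A ⊗ₖ B‖ ≤ ‖A‖ * ‖B‖ := by
  have hfact : A ⊗ₖ B = (A ⊗ₖ (1 : Matrix p p ℂ)) * ((1 : Matrix n n ℂ) ⊗ₖ B) := by
    rw [← Matrix.mul_kronecker_mul, mul_one, one_mul]
  calc ‖A ⊗ₖ B‖ ≤ ‖A ⊗ₖ (1 : Matrix p p ℂ)‖ * ‖(1 : Matrix n n ℂ) ⊗ₖ B‖ := by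
        rw [hfact]; exact Matrix.l2_opNorm_mul _ _
    _ ≤ ‖A‖ * ‖B‖ := mul_le_mul (kron_one_norm_le A) (one_kron_norm_le B)
        (norm_nonneg _) (norm_nonneg _)

private lemma clifford_sum_sq {K : ℕ} (Γ : Fin K → Matrix n n ℂ)
    (hunit : ∀ k, Γ k * Γ k = 1)
    (hanti : ∀ i j, i ≠ j → Γ i * Γ j + Γ j * Γ i = 0) :
    (∑ k, Γ k) * (∑ k, Γ k) = (K : ℂ) • 1 := by
  have expand : (∑ k, Γ k) * (∑ k, Γ k) = ∑ i, ∑ j, Γ i * Γ j := by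
    rw [Finset.sum_mul_sum]
  have inner : ∀ i : Fin K, ∑ j, (Γ i * Γ j + Γ j * Γ i) = (2 : ℂ) • 1 := by
    intro i
    rw [Finset.sum_eq_single i]
    · rw [hunit i, two_smul]
    · intro j _ hji
      exact hanti i j (Ne.symm hji)
    · intro h; exact absurd (Finset.mem_univ i) h
  have h2 : (2 : ℂ) • ((∑ k, Γ k) * (∑ k, Γ k)) = (2 : ℂ) • ((K : ℂ) • 1) := by
    have swap : (∑ i, ∑ j, Γ j * Γ i) = ∑ i : Fin K, ∑ j, Γ i * Γ j := Finset.sum_comm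
    calc (2 : ℂ) • ((∑ k, Γ k) * (∑ k, Γ k))
        = (∑ i, ∑ j, Γ i * Γ j) + ∑ i, ∑ j, Γ j * Γ i := by
          rw [two_smul, expand, swap]
      _ = ∑ i : Fin K, ∑ j, (Γ i * Γ j + Γ j * Γ i) := by
          rw [← Finset.sum_add_distrib]
          exact Finset.sum_congr rfl fun i _ => (Finset.sum_add_distrib).symm
      _ = ∑ _i : Fin K, (2 : ℂ) • (1 : Matrix n n ℂ) := Finset.sum_congr rfl fun i _ => inner i
      _ = (2 : ℂ) • ((K : ℂ) • 1) := by
          rw [Finset.sum_const, Finset.card_univ, Fintype.card_fin, smul_comm,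
            Nat.cast_smul_eq_nsmul ℂ]
  exact smul_right_injective _ (two_ne_zero) h2

private lemma clifford_sum_norm_le {K : ℕ} (Γ : Fin K → Matrix n n ℂ)
    (hherm : ∀ k, (Γ k).IsHermitian)
    (hunit : ∀ k, Γ k * Γ k = 1)
    (hanti : ∀ i j, i ≠ j → Γ i * Γ j + Γ j * Γ i = 0) :
    ‖∑ k, Γ k‖ ≤ Real.sqrt K := by
  have hG : (∑ k, Γ k)ᴴ = ∑ k, Γ k := by
    rw [conjTranspose_sum]
    exact Finset.sum_congr rfl fun k _ => hherm k
  have h1 : ‖∑ k, Γ k‖ ^ 2 = ‖(K : ℂ) • (1 : Matrix n n ℂ)‖ := by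
    rw [sq, ← Matrix.l2_opNorm_conjTranspose_mul_self, hG,
      clifford_sum_sq Γ hunit hanti]
  have h2 : ‖(K : ℂ) • (1 : Matrix n n ℂ)‖ ≤ K := by
    rw [norm_smul, Complex.norm_natCast]
    calc (K : ℝ) * ‖(1 : Matrix n n ℂ)‖ ≤ (K : ℝ) * 1 :=
          mul_le_mul_of_nonneg_left matrix_norm_one_le (Nat.cast_nonneg K)
      _ = K := mul_one _
  rw [← Real.sqrt_sq (norm_nonneg (∑ k, Γ k))]
  exact Real.sqrt_le_sqrt (h1 ▸ h2)

private lemma delta_norm_le (M₀ : Matrix p p ℂ)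
    (hM₀ : M₀.PosSemidef) (hM₁ : (1 - M₀).PosSemidef) :
    ‖M₀ - (1 - M₀)‖ ≤ 1 := by
  obtain ⟨s, hsherm, hss⟩ : ∃ s : Matrix p p ℂ, sᴴ = s ∧ s * s = M₀ := by
    open scoped MatrixOrder in
    obtain ⟨X, hX, -, hXX⟩ := CFC.exists_sqrt_of_isSelfAdjoint_of_quasispectrumRestricts
      hM₀.isHermitian (QuasispectrumRestricts.nnreal_of_nonneg hM₀.nonneg)
    exact ⟨X, hX, hXX⟩
  have hP : (M₀ * (1 - M₀)).PosSemidef := by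
    have h1 : s * (1 - M₀) * sᴴ = M₀ * (1 - M₀) := by
      rw [hsherm]
      have h2 : s * (1 - (s * s)) * s = (s * s) * (1 - (s * s)) := by noncomm_ring
      rw [hss] at h2
      exact h2
    exact h1 ▸ hM₁.mul_mul_conjTranspose_same s
  have hQ : ((M₀ * (1 - M₀)) + (M₀ * (1 - M₀)) + ((M₀ * (1 - M₀)) + (M₀ * (1 - M₀)))).PosSemidef :=
    (hP.add hP).add (hP.add hP)
  have hΔherm : (M₀ - (1 - M₀))ᴴ = M₀ - (1 - M₀) := hM₀.isHermitian.sub hM₁.isHermitian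
  have hΔΔ : (M₀ - (1 - M₀)) * (M₀ - (1 - M₀))
      = 1 - ((M₀ * (1 - M₀)) + (M₀ * (1 - M₀)) + ((M₀ * (1 - M₀)) + (M₀ * (1 - M₀)))) := by
    noncomm_ring
  set Δ := M₀ - (1 - M₀) with hΔdef
  set Q := (M₀ * (1 - M₀)) + (M₀ * (1 - M₀)) + ((M₀ * (1 - M₀)) + (M₀ * (1 - M₀))) with hQdef
  refine opNorm_le_of_forall _ zero_le_one fun x => ?_
  have e2 : star (Δ *ᵥ x) ⬝ᵥ (Δ *ᵥ x) = star x ⬝ᵥ ((Δ * Δ) *ᵥ x) :=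
    calc star (Δ *ᵥ x) ⬝ᵥ (Δ *ᵥ x) = (star x ᵥ* Δ) ⬝ᵥ (Δ *ᵥ x) := by rw [star_mulVec, hΔherm]
      _ = star x ⬝ᵥ (Δ *ᵥ (Δ *ᵥ x)) := (dotProduct_mulVec _ _ _).symm
      _ = star x ⬝ᵥ ((Δ * Δ) *ᵥ x) := by rw [mulVec_mulVec]
  have e3 : star x ⬝ᵥ ((Δ * Δ) *ᵥ x) = star x ⬝ᵥ x - star x ⬝ᵥ (Q *ᵥ x) := by
    rw [hΔΔ, sub_mulVec, dotProduct_sub, one_mulVec]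
  have e4 : (0:ℝ) ≤ (star x ⬝ᵥ (Q *ᵥ x)).re := by
    have := hQ.dotProduct_mulVec_nonneg x
    rw [Complex.le_def] at this
    simpa using this.1
  calc ∑ i, ‖(Δ *ᵥ x) i‖ ^ 2 = (star (Δ *ᵥ x) ⬝ᵥ (Δ *ᵥ x)).re := sum_sq_eq_re _
    _ = (star x ⬝ᵥ x).re - (star x ⬝ᵥ (Q *ᵥ x)).re := by rw [e2, e3, Complex.sub_re]
    _ ≤ (star x ⬝ᵥ x).re := by linarith
    _ = 1 ^ 2 * ∑ i, ‖x i‖ ^ 2 := by rw [one_pow, one_mul, sum_sq_eq_re]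

end Stmt9Aux


/-- For a Clifford family `Γ₁, …, Γ_K` (Hermitian, unitary, pairwise
anticommuting `d × d` matrices) and any binary POVM `(M₀, M₁)` (positive semidefinite
`D × D` matrices with `M₀ + M₁ = I_D`),
`‖(1/(2K)) ∑ₖ ((I + Γₖ) ⊗ M₀ + (I − Γₖ) ⊗ M₁)‖ ≤ 1/2 + 1/(2√K)`. This is the
indistinguishability security of the Clifford encryption scheme. -/
theorem stmt9 (K d D : ℕ) (hK : 1 ≤ K)
    (Γ : Fin K → Matrix (Fin d) (Fin d) ℂ)
    (hherm : ∀ k, (Γ k).IsHermitian)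
    (hunit : ∀ k, Γ k * Γ k = 1)
    (hanti : ∀ i j, i ≠ j → Γ i * Γ j + Γ j * Γ i = 0)
    (M₀ M₁ : Matrix (Fin D) (Fin D) ℂ)
    (hM₀ : M₀.PosSemidef) (hM₁ : M₁.PosSemidef) (hPOVM : M₀ + M₁ = 1) :
    ‖(1 / (2 * K) : ℝ) •
        ∑ k, (((1 : Matrix (Fin d) (Fin d) ℂ) + Γ k) ⊗ₖ M₀
          + ((1 : Matrix (Fin d) (Fin d) ℂ) - Γ k) ⊗ₖ M₁)‖
      ≤ 1 / 2 + 1 / (2 * Real.sqrt K) := by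
  have hM1eq : M₁ = 1 - M₀ := by rw [← hPOVM]; abel
  set G : Matrix (Fin d) (Fin d) ℂ := ∑ k, Γ k with hGdef
  set Δ : Matrix (Fin D) (Fin D) ℂ := M₀ - M₁ with hΔdef
  -- decompose the sum
  have per : ∀ k : Fin K, ((1 : Matrix (Fin d) (Fin d) ℂ) + Γ k) ⊗ₖ M₀
      + ((1 : Matrix (Fin d) (Fin d) ℂ) - Γ k) ⊗ₖ M₁
      = (1 : Matrix (Fin d) (Fin d) ℂ) ⊗ₖ (1 : Matrix (Fin D) (Fin D) ℂ) + (Γ k) ⊗ₖ Δ := by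
    intro k
    subst hM1eq
    ext ⟨i, j⟩ ⟨i', j'⟩
    simp only [Matrix.add_apply, kroneckerMap_apply, Matrix.sub_apply, hΔdef]
    ring
  have hsum : ∑ k, (((1 : Matrix (Fin d) (Fin d) ℂ) + Γ k) ⊗ₖ M₀
      + ((1 : Matrix (Fin d) (Fin d) ℂ) - Γ k) ⊗ₖ M₁)
      = (K : ℕ) • ((1 : Matrix (Fin d) (Fin d) ℂ) ⊗ₖ (1 : Matrix (Fin D) (Fin D) ℂ))
        + G ⊗ₖ Δ := by
    rw [Finset.sum_congr rfl fun k _ => per k, Finset.sum_add_distrib, Finset.sum_const,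
      Finset.card_univ, Fintype.card_fin]
    congr 1
    ext ⟨i, j⟩ ⟨i', j'⟩
    simp [Finset.sum_apply, kroneckerMap_apply, hGdef, Finset.sum_mul, Matrix.sum_apply]
  rw [hsum]
  -- norms
  have hKpos : (0:ℝ) < K := by exact_mod_cast hK
  have hGnorm : ‖G‖ ≤ Real.sqrt K := clifford_sum_norm_le Γ hherm hunit hanti
  have hΔnorm : ‖Δ‖ ≤ 1 := by
    rw [hΔdef, hM1eq]
    exact delta_norm_le M₀ hM₀ (hM1eq ▸ hM₁)
  have hone : ‖(1 : Matrix (Fin d) (Fin d) ℂ) ⊗ₖ (1 : Matrix (Fin D) (Fin D) ℂ)‖ ≤ 1 := by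
    rw [Matrix.one_kronecker_one]
    exact matrix_norm_one_le
  have hGΔ : ‖G ⊗ₖ Δ‖ ≤ Real.sqrt K := by
    calc ‖G ⊗ₖ Δ‖ ≤ ‖G‖ * ‖Δ‖ := kron_norm_le G Δ
      _ ≤ Real.sqrt K * 1 := mul_le_mul hGnorm hΔnorm (norm_nonneg _)
          (Real.sqrt_nonneg _)
      _ = Real.sqrt K := mul_one _
  have hbig : ‖(K : ℕ) • ((1 : Matrix (Fin d) (Fin d) ℂ) ⊗ₖ (1 : Matrix (Fin D) (Fin D) ℂ))
      + G ⊗ₖ Δ‖ ≤ K + Real.sqrt K := by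
    calc ‖(K : ℕ) • ((1 : Matrix (Fin d) (Fin d) ℂ) ⊗ₖ (1 : Matrix (Fin D) (Fin D) ℂ))
        + G ⊗ₖ Δ‖
        ≤ ‖(K : ℕ) • ((1 : Matrix (Fin d) (Fin d) ℂ) ⊗ₖ (1 : Matrix (Fin D) (Fin D) ℂ))‖
          + ‖G ⊗ₖ Δ‖ := norm_add_le _ _
      _ ≤ (K : ℝ) * 1 + Real.sqrt K := by
          refine add_le_add ?_ hGΔ
          calc ‖(K : ℕ) • ((1 : Matrix (Fin d) (Fin d) ℂ) ⊗ₖ (1 : Matrix (Fin D) (Fin D) ℂ))‖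
              ≤ (K : ℝ) * ‖(1 : Matrix (Fin d) (Fin d) ℂ) ⊗ₖ (1 : Matrix (Fin D) (Fin D) ℂ)‖ :=
                norm_nsmul_le
            _ ≤ (K : ℝ) * 1 := mul_le_mul_of_nonneg_left hone (Nat.cast_nonneg K)
      _ = K + Real.sqrt K := by rw [mul_one]
  -- scalar
  have hsmul : ‖(1 / (2 * (K:ℝ))) • ((K : ℕ) • ((1 : Matrix (Fin d) (Fin d) ℂ)
      ⊗ₖ (1 : Matrix (Fin D) (Fin D) ℂ)) + G ⊗ₖ Δ)‖
      = (1 / (2 * (K:ℝ))) * ‖(K : ℕ) • ((1 : Matrix (Fin d) (Fin d) ℂ)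
      ⊗ₖ (1 : Matrix (Fin D) (Fin D) ℂ)) + G ⊗ₖ Δ‖ := by
    have hcoe : ∀ (r : ℝ) (A : Matrix (Fin d × Fin D) (Fin d × Fin D) ℂ),
        r • A = (r : ℂ) • A := by
      intro r A; ext ij kl; simp [Matrix.smul_apply, Complex.real_smul]
    rw [hcoe, norm_smul, Complex.norm_real, Real.norm_eq_abs, abs_of_nonneg (by positivity)]
  rw [hsmul]
  have hfinal : (1 / (2 * (K:ℝ))) * ((K:ℝ) + Real.sqrt K)
      = 1 / 2 + 1 / (2 * Real.sqrt K) := by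
    have hs0 : (0:ℝ) < Real.sqrt K := Real.sqrt_pos.2 hKpos
    have hsq : Real.sqrt K * Real.sqrt K = K := Real.mul_self_sqrt hKpos.le
    field_simp
    nlinarith [hsq, hs0, hKpos]
  calc (1 / (2 * (K:ℝ))) * ‖(K : ℕ) • ((1 : Matrix (Fin d) (Fin d) ℂ)
      ⊗ₖ (1 : Matrix (Fin D) (Fin D) ℂ)) + G ⊗ₖ Δ‖
      ≤ (1 / (2 * (K:ℝ))) * ((K:ℝ) + Real.sqrt K) :=
        mul_le_mul_of_nonneg_left hbig (by positivity)
    _ = 1 / 2 + 1 / (2 * Real.sqrt K) := hfinal
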